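/- Let G be a group acting minimally by homeomorphisms on a nonempty compact Hausdorff space X, and let V ⊆ X be a nonempty open subset. Then there exist finitely many elements t₁, …, tₙ ∈ G and continuous functions h₁, …, hₙ : X → [0,1] with Σᵢ hᵢ = 1 and supp(hᵢ) ⊆ tᵢ·V for each i, such that for every Radon probability measure ν on X the measure Σᵢ (tᵢ⁻¹)_*(hᵢ·ν) — where hᵢ·ν denotes ν with density hᵢ and (tᵢ⁻¹)_* denotes pushforward along the homeomorphism x ↦ tᵢ⁻¹·x — is a probability measure that vanishes outside the closure of V (it assigns measure zero to the complement of the closure of V). -/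

import Mathlib

open MeasureTheory Pointwise

/-- The Dirac probability measure at a point. -/
noncomputable def diracProb {X : Type*} [MeasurableSpace X] (x : X) :
    ProbabilityMeasure X :=
  ⟨Measure.dirac x, inferInstance⟩

/-- The pushforward action of a group element on probability measures:
`(g • μ)(E) = μ (g⁻¹ • E)`. -/
noncomputable def pushforwardProb {G X : Type*} [Group G] [TopologicalSpace X]
    [MeasurableSpace X] [BorelSpace X] [MulAction G X] [ContinuousConstSMul G X]
    (g : G) (μ : ProbabilityMeasure X) : ProbabilityMeasure X :=
  μ.map (f := fun x => g • x) ((continuous_const_smul g).measurable.aemeasurable)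

/-- The action of `G` on `X` is minimal if every orbit is dense. -/
def IsMinimalAction (G X : Type*) [Group G] [TopologicalSpace X] [MulAction G X] : Prop :=
  ∀ x : X, Dense (MulAction.orbit G x)

/-- The action of `G` on `X` is strongly proximal if the weak-* closure of the orbit of every
probability measure on `X` contains a Dirac measure. -/
def IsStronglyProximal (G X : Type*) [Group G] [TopologicalSpace X] [MeasurableSpace X]
    [BorelSpace X] [MulAction G X] [ContinuousConstSMul G X] : Prop :=
  ∀ μ : ProbabilityMeasure X, ∃ x : X,
    diracProb x ∈ closure {ν | ∃ g : G, ν = pushforwardProb g μ}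

/-- For a minimal action of `G` on a nonempty compact Hausdorff space `X` and a
nonempty open set `V ⊆ X`, there are finitely many group elements `tᵢ` and continuous functions
`hᵢ : X → [0,1]` with `∑ᵢ hᵢ = 1` and `supp hᵢ ⊆ tᵢ • V`, such that for every probability
measure `ν` on `X`, the measure `∑ᵢ (tᵢ⁻¹)_*(hᵢ · ν)` is a probability measure vanishing
outside the closure of `V`. -/
theorem exists_partition_contracting_into_open
    {G X : Type*} [Group G] [TopologicalSpace X] [CompactSpace X] [T2Space X] [Nonempty X]
    [MeasurableSpace X] [BorelSpace X] [MulAction G X] [ContinuousConstSMul G X]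
    (hmin : IsMinimalAction G X) (V : Set X) (hV : IsOpen V) (hVne : V.Nonempty) :
    ∃ (n : ℕ) (t : Fin n → G) (h : Fin n → C(X, ℝ)),
      (∀ i, ∀ x, 0 ≤ h i x ∧ h i x ≤ 1) ∧
      (∀ x, ∑ i, h i x = 1) ∧
      (∀ i, tsupport ⇑(h i) ⊆ (t i) • V) ∧
      (∀ ν : Measure X, IsProbabilityMeasure ν →
        IsProbabilityMeasure
          (∑ i, Measure.map (fun x => (t i)⁻¹ • x)
            (ν.withDensity fun x => ENNReal.ofReal (h i x))) ∧
        (∑ i, Measure.map (fun x => (t i)⁻¹ • x)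
            (ν.withDensity fun x => ENNReal.ofReal (h i x))) ((closure V)ᶜ) = 0) := by
  -- Step 1: X is covered by translates of V.
  have cover : ∀ x : X, ∃ g : G, x ∈ g • V := by
    intro x
    obtain ⟨y, hy_orbit, hyV⟩ := (hmin x).exists_mem_open hV hVne
    obtain ⟨g, rfl⟩ := hy_orbit
    exact ⟨g⁻¹, by simpa [Set.mem_smul_set_iff_inv_smul_mem] using hyV⟩
  have hcov : (Set.univ : Set X) ⊆ ⋃ g : G, g • V := fun x _ => by
    obtain ⟨g, hg⟩ := cover x; exact Set.mem_iUnion.2 ⟨g, hg⟩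
  obtain ⟨s, hs⟩ := isCompact_univ.elim_finite_subcover (fun g : G => g • V)
    (fun g => hV.smul g) hcov
  set n := s.card with hn
  set t : Fin n → G := fun i => (s.equivFin.symm i : G) with ht
  have hcov' : (Set.univ : Set X) ⊆ ⋃ i : Fin n, (t i) • V := by
    intro x hx
    obtain ⟨g, hgs, hgx⟩ := Set.mem_iUnion₂.1 (hs hx)
    exact Set.mem_iUnion.2 ⟨s.equivFin ⟨g, hgs⟩, by simpa [ht] using hgx⟩
  -- Step 2: partition of unity subordinate to the cover.
  obtain ⟨f, hf⟩ := PartitionOfUnity.exists_isSubordinate (isClosed_univ (X := X))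
    (fun i : Fin n => (t i) • V) (fun i => hV.smul (t i)) hcov'
  have hsum : ∀ x : X, ∑ i, f i x = 1 := by
    intro x
    have := f.sum_eq_one (Set.mem_univ x)
    rwa [finsum_eq_sum_of_fintype] at this
  refine ⟨n, t, fun i => f i, fun i x => ⟨f.nonneg i x, f.le_one i x⟩, hsum, hf, ?_⟩
  intro ν hν
  have hmeas : ∀ i : Fin n, Measurable fun x : X => (t i)⁻¹ • x :=
    fun i => (continuous_const_smul ((t i)⁻¹)).measurable
  have hEm : MeasurableSet ((closure V)ᶜ) := isClosed_closure.measurableSet.compl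
  have hdens : ∀ i : Fin n, Measurable fun x : X => ENNReal.ofReal (f i x) :=
    fun i => ENNReal.measurable_ofReal.comp (f i).continuous.measurable
  constructor
  · constructor
    rw [Measure.coe_finset_sum, Finset.sum_apply]
    have : ∀ i ∈ Finset.univ, (Measure.map (fun x => (t i)⁻¹ • x)
        (ν.withDensity fun x => ENNReal.ofReal (f i x))) Set.univ
        = ∫⁻ x, ENNReal.ofReal (f i x) ∂ν := by
      intro i _
      rw [Measure.map_apply (hmeas i) MeasurableSet.univ, Set.preimage_univ,
        withDensity_apply _ MeasurableSet.univ, Measure.restrict_univ]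
    rw [Finset.sum_congr rfl this, ← lintegral_finset_sum _ (fun i _ => hdens i)]
    have : ∀ x : X, ∑ i, ENNReal.ofReal (f i x) = 1 := by
      intro x
      rw [← ENNReal.ofReal_sum_of_nonneg (fun i _ => f.nonneg i x), hsum x,
        ENNReal.ofReal_one]
    simp only [this, lintegral_one, measure_univ]
  · rw [Measure.coe_finset_sum, Finset.sum_apply]
    refine Finset.sum_eq_zero fun i _ => ?_
    rw [Measure.map_apply (hmeas i) hEm,
      withDensity_apply _ ((hEm.preimage (hmeas i)))]
    have hzero : ∀ x ∈ (fun x : X => (t i)⁻¹ • x) ⁻¹' (closure V)ᶜ,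
        ENNReal.ofReal (f i x) = 0 := by
      intro x hx
      have hxV : x ∉ (t i) • V := by
        intro hxV
        exact hx (subset_closure (by rwa [Set.mem_smul_set_iff_inv_smul_mem] at hxV))
      have : f i x = 0 := by
        by_contra hne
        exact hxV (hf i (subset_tsupport _ (by simpa using hne)))
      simp [this]
    calc ∫⁻ x in (fun x : X => (t i)⁻¹ • x) ⁻¹' (closure V)ᶜ, ENNReal.ofReal (f i x) ∂ν
        = ∫⁻ _ in (fun x : X => (t i)⁻¹ • x) ⁻¹' (closure V)ᶜ, 0 ∂ν := by
          refine setLIntegral_congr_fun (hEm.preimage (hmeas i)) ?_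
          exact hzero
      _ = 0 := by simp
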